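/- Let G be a finite simple graph and let P = v₀v₁⋯v_k be a path in G such that for each i with 0 < i < k, there is no path from v_{i−1} to v_{i+1} in G − v_i. Then for every vertex x of G, in the graph G − x the following holds: for each connected component C of G − x, the set ({v₀, …, v_k} − {x}) ∩ V(C) is either empty or is the vertex set of a path u₀u₁⋯u_m of C such that for each 0 < j < m there is no path from u_{j−1} to u_{j+1} in (G − x) − u_j. In particular, if x = v_i for some 0 < i < k, then v_{i−1} and v_{i+1} lie in distinct components of G − v_i, and the subpaths v₀⋯v_{i−1} and v_{i+1}⋯v_k each retain the separation property in G − v_i. -/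

import Mathlib

/-- `a` and `b` are joined by a path of `G` avoiding the vertex `x`, i.e. they are
connected in `G − x`. -/
def ReachAvoiding {V : Type*} (G : SimpleGraph V) (x a b : V) : Prop :=
  ∃ q : G.Walk a b, x ∉ q.support

/-- The list of vertices `m` has the separation property in `G − x`: for each internal
index `j`, there is no path from `m_{j−1}` to `m_{j+1}` in `(G − x) − m_j`, i.e. every
walk between them in `G` avoiding `x` passes through `m_j`. -/
def SepPropAvoiding {V : Type*} (G : SimpleGraph V) (x : V) (m : List V) : Prop :=
  ∀ j : ℕ, 0 < j → ∀ hj : j + 1 < m.length,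
    ∀ q : G.Walk (m.get ⟨j - 1, by omega⟩) (m.get ⟨j + 1, hj⟩),
      x ∉ q.support → m.get ⟨j, by omega⟩ ∈ q.support

section AuxLemmas
variable {V : Type*} {G : SimpleGraph V} {x a b c : V}

lemma ra_refl (h : a ≠ x) : ReachAvoiding G x a a :=
  ⟨SimpleGraph.Walk.nil, by simp [Ne.symm h]⟩

lemma ra_symm (h : ReachAvoiding G x a b) : ReachAvoiding G x b a := by
  obtain ⟨q, hq⟩ := h
  exact ⟨q.reverse, by simpa using hq⟩

lemma ra_trans (h : ReachAvoiding G x a b) (h' : ReachAvoiding G x b c) :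
    ReachAvoiding G x a c := by
  obtain ⟨q, hq⟩ := h; obtain ⟨q', hq'⟩ := h'
  refine ⟨q.append q', ?_⟩
  rw [SimpleGraph.Walk.support_append]
  simp only [List.mem_append]
  rintro (h | h)
  · exact hq h
  · exact hq' (List.mem_of_mem_tail h)

lemma chain_ra_cons : ∀ (m' : List V) (a : V), (a :: m').Chain' G.Adj →
    (∀ v ∈ a :: m', v ≠ x) → ∀ b ∈ a :: m', ReachAvoiding G x a b := by
  intro m'
  induction m' with
  | nil => intro a _ hx b hb; simp at hb; subst hb; exact ra_refl (hx b (by simp))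
  | cons a' m'' ih =>
    intro a hc hx b hb
    rcases List.mem_cons.1 hb with rfl | hb
    · exact ra_refl (hx b (by simp))
    · have hadj : G.Adj a a' := (List.isChain_cons_cons.1 hc).1
      have h1 : ReachAvoiding G x a a' :=
        ⟨hadj.toWalk, by
          simp only [SimpleGraph.Walk.support_cons, List.mem_cons]
          rintro (rfl | h)
          · exact hx x (by simp) rfl
          · simp at h; exact hx x (by simp [h.symm]) rfl⟩
      exact ra_trans h1 (ih a' (List.isChain_cons_cons.1 hc).2
        (fun v hv => hx v (List.mem_cons_of_mem _ hv)) b hb)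

lemma chain_ra (m : List V) (hc : m.Chain' G.Adj) (hx : ∀ v ∈ m, v ≠ x)
    (ha : a ∈ m) (hb : b ∈ m) : ReachAvoiding G x a b := by
  cases m with
  | nil => simp at ha
  | cons h t =>
    exact ra_trans (ra_symm (chain_ra_cons t h hc hx a ha)) (chain_ra_cons t h hc hx b hb)

section
variable {l : List V}
  (hsep : ∀ i : ℕ, 0 < i → ∀ hi : i + 1 < l.length,
      ∀ q : G.Walk (l.get ⟨i - 1, by omega⟩) (l.get ⟨i + 1, hi⟩),
        l.get ⟨i, by omega⟩ ∈ q.support)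

include hsep

lemma sep_take (i : ℕ) : SepPropAvoiding G x (l.take i) := by
  intro j hj hjl q hq
  have hlen : j + 1 < l.length := by
    have := hjl; simp only [List.length_take, lt_min_iff] at this; omega
  have e1 : (l.take i).get ⟨j - 1, by omega⟩ = l.get ⟨j - 1, by omega⟩ := by
    simp [List.get_eq_getElem, List.getElem_take]
  have e2 : (l.take i).get ⟨j + 1, hjl⟩ = l.get ⟨j + 1, hlen⟩ := by
    simp [List.get_eq_getElem, List.getElem_take]
  have e3 : (l.take i).get ⟨j, by omega⟩ = l.get ⟨j, by omega⟩ := by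
    simp [List.get_eq_getElem, List.getElem_take]
  rw [e3]
  have := hsep j hj hlen (q.copy e1 e2)
  simpa using this

lemma sep_drop (i : ℕ) : SepPropAvoiding G x (l.drop i) := by
  intro j hj hjl q hq
  have hlen : i + j + 1 < l.length := by
    have := hjl; simp only [List.length_drop] at this; omega
  have e1 : (l.drop i).get ⟨j - 1, by omega⟩ = l.get ⟨i + j - 1, by omega⟩ := by
    simp only [List.get_eq_getElem, List.getElem_drop]
    congr 1; omega
  have e2 : (l.drop i).get ⟨j + 1, hjl⟩ = l.get ⟨i + j + 1, hlen⟩ := by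
    simp only [List.get_eq_getElem, List.getElem_drop]
    congr 1
  have e3 : (l.drop i).get ⟨j, by omega⟩ = l.get ⟨i + j, by omega⟩ := by
    simp only [List.get_eq_getElem, List.getElem_drop]
  rw [e3]
  have := hsep (i + j) (by omega) hlen (q.copy e1 e2)
  simpa using this

end
end AuxLemmas

/-- Let `P = v₀v₁⋯v_k` be a path of `G` such that for each `0 < i < k`
there is no path from `v_{i−1}` to `v_{i+1}` in `G − v_i`. Then for every vertex `x`:
(1) for every connected component of `G − x` (described as the set of vertices reachable
from some vertex `c ≠ x` by walks avoiding `x`), the intersection of `{v₀, …, v_k} − {x}`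
with the component is empty or is the vertex set of a path of the component having the
separation property in `G − x`; and
(2) if `x = v_i` for some `0 < i < k`, then `v_{i−1}` and `v_{i+1}` lie in distinct
components of `G − v_i`, and the subpaths `v₀⋯v_{i−1}` and `v_{i+1}⋯v_k` each retain the
separation property in `G − v_i`. -/
theorem stmt6 {V : Type*} [Fintype V] (G : SimpleGraph V) (l : List V) (hne : l ≠ [])
    (hchain : l.Chain' G.Adj) (hnodup : l.Nodup)
    (hsep : ∀ i : ℕ, 0 < i → ∀ hi : i + 1 < l.length,
      ∀ q : G.Walk (l.get ⟨i - 1, by omega⟩) (l.get ⟨i + 1, hi⟩),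
        l.get ⟨i, by omega⟩ ∈ q.support) :
    ∀ x : V,
      ((∀ c : V, c ≠ x →
        ({v | v ∈ l} \ {x}) ∩ {y | ReachAvoiding G x c y} = ∅ ∨
        ∃ m : List V, m.Nodup ∧ m.Chain' G.Adj ∧ (∀ v ∈ m, v ≠ x) ∧
          {v | v ∈ m} = ({v | v ∈ l} \ {x}) ∩ {y | ReachAvoiding G x c y} ∧
          SepPropAvoiding G x m) ∧
      (∀ i : ℕ, 0 < i → ∀ hi : i + 1 < l.length, x = l.get ⟨i, by omega⟩ →
        ¬ ReachAvoiding G x (l.get ⟨i - 1, by omega⟩) (l.get ⟨i + 1, hi⟩) ∧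
        SepPropAvoiding G x (l.take i) ∧ SepPropAvoiding G x (l.drop (i + 1)))) := by
  intro x
  refine ⟨?_, ?_⟩
  · -- Part 1
    intro c hcx
    by_cases hxl : x ∈ l
    · -- x lies on the path, at index i
      obtain ⟨⟨i0, hil⟩, hgx⟩ := List.mem_iff_get.1 hxl
      set t := l.take i0 with ht
      set d := l.drop (i0 + 1) with hd
      have hxdrop : x ∈ l.drop i0 := by
        rw [← (show l.get ⟨i0, hil⟩ :: l.drop (i0 + 1) = l.drop i0 from List.getElem_cons_drop hil), hgx]; exact List.mem_cons_self
      have hxt : x ∉ t := fun h => List.disjoint_take_drop hnodup (le_refl i0) h hxdrop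
      have hxtake : x ∈ l.take (i0 + 1) := by
        have h1 : i0 < (l.take (i0 + 1)).length := by
          simp only [List.length_take]; omega
        have : (l.take (i0 + 1)).get ⟨i0, h1⟩ = x := by
          simp only [List.get_eq_getElem, List.getElem_take]; exact hgx
        exact this ▸ List.get_mem _ _
      have hxd : x ∉ d := fun h =>
        List.disjoint_take_drop hnodup (le_refl (i0 + 1)) hxtake h
      have hmem : ∀ y, y ∈ l ↔ y ∈ t ∨ y = x ∨ y ∈ d := by
        intro y
        conv_lhs => rw [← List.take_append_drop i0 l,
          ← (show l.get ⟨i0, hil⟩ :: l.drop (i0 + 1) = l.drop i0 from List.getElem_cons_drop hil), hgx]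
        simp [ht, hd]
      have havt : ∀ v ∈ t, v ≠ x := fun v hv h => hxt (h ▸ hv)
      have havd : ∀ v ∈ d, v ≠ x := fun v hv h => hxd (h ▸ hv)
      have hct : t.Chain' G.Adj := hchain.take i0
      have hcd : d.Chain' G.Adj := hchain.drop (i0 + 1)
      have hkey : ∀ a ∈ t, ∀ b ∈ d, ¬ ReachAvoiding G x a b := by
        intro a ha b hb hr
        have hi0 : 0 < i0 := by
          by_contra h
          have : i0 = 0 := by omega
          subst this; simp [ht] at ha
        have hi1 : i0 + 1 < l.length := by
          by_contra h
          have : d = [] := by simp [hd]; omega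
          rw [this] at hb; simp at hb
        have hmt : l.get ⟨i0 - 1, by omega⟩ ∈ t := by
          have h1 : i0 - 1 < t.length := by simp [ht, List.length_take]; omega
          have : t.get ⟨i0 - 1, h1⟩ = l.get ⟨i0 - 1, by omega⟩ := by
            simp [ht, List.get_eq_getElem, List.getElem_take]
          exact this ▸ List.get_mem _ _
        have hmd : l.get ⟨i0 + 1, hi1⟩ ∈ d := by
          have h1 : 0 < d.length := by simp [hd, List.length_drop]; omega
          have : d.get ⟨0, h1⟩ = l.get ⟨i0 + 1, hi1⟩ := by
            simp [hd, List.get_eq_getElem, List.getElem_drop]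
          exact this ▸ List.get_mem _ _
        have hreach : ReachAvoiding G x (l.get ⟨i0 - 1, by omega⟩) (l.get ⟨i0 + 1, hi1⟩) :=
          ra_trans (chain_ra t hct havt hmt ha)
            (ra_trans hr (chain_ra d hcd havd hb hmd))
        obtain ⟨q, hq⟩ := hreach
        have := hsep i0 hi0 hi1 q
        rw [hgx] at this
        exact hq this
      by_cases hT : ∃ a ∈ t, ReachAvoiding G x c a
      · by_cases hD : ∃ b ∈ d, ReachAvoiding G x c b
        · obtain ⟨a, ha, hca⟩ := hT
          obtain ⟨b, hb, hcb⟩ := hD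
          exact absurd (ra_trans (ra_symm hca) hcb) (hkey a ha b hb)
        · -- component of t
          obtain ⟨a, ha, hca⟩ := hT
          right
          refine ⟨t, (List.take_sublist _ _).nodup hnodup, hct, havt, ?_, sep_take hsep i0⟩
          ext y
          simp only [Set.mem_setOf_eq, Set.mem_inter_iff, Set.mem_diff,
            Set.mem_singleton_iff]
          constructor
          · intro hy
            exact ⟨⟨(hmem y).2 (Or.inl hy), havt y hy⟩,
              ra_trans hca (chain_ra t hct havt ha hy)⟩
          · rintro ⟨⟨hyl, hyx⟩, hcy⟩
            rcases (hmem y).1 hyl with h | h | h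
            · exact h
            · exact absurd h hyx
            · exact absurd ⟨y, h, hcy⟩ hD
      · by_cases hD : ∃ b ∈ d, ReachAvoiding G x c b
        · -- component of d
          obtain ⟨b, hb, hcb⟩ := hD
          right
          refine ⟨d, (List.drop_sublist _ _).nodup hnodup, hcd, havd, ?_,
            sep_drop hsep (i0 + 1)⟩
          ext y
          simp only [Set.mem_setOf_eq, Set.mem_inter_iff, Set.mem_diff,
            Set.mem_singleton_iff]
          constructor
          · intro hy
            exact ⟨⟨(hmem y).2 (Or.inr (Or.inr hy)), havd y hy⟩,
              ra_trans hcb (chain_ra d hcd havd hb hy)⟩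
          · rintro ⟨⟨hyl, hyx⟩, hcy⟩
            rcases (hmem y).1 hyl with h | h | h
            · exact absurd ⟨y, h, hcy⟩ hT
            · exact absurd h hyx
            · exact h
        · left
          rw [Set.eq_empty_iff_forall_notMem]
          rintro y ⟨⟨hyl, hyx⟩, hcy⟩
          rcases (hmem y).1 hyl with h | h | h
          · exact hT ⟨y, h, hcy⟩
          · exact hyx h
          · exact hD ⟨y, h, hcy⟩
    · -- x not on the path
      by_cases hS : ∃ v ∈ l, ReachAvoiding G x c v
      · obtain ⟨v, hvl, hcv⟩ := hS
        have hav : ∀ v ∈ l, v ≠ x := fun v hv h => hxl (h ▸ hv)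
        right
        refine ⟨l, hnodup, hchain, hav, ?_, fun j hj hjl q _ => hsep j hj hjl q⟩
        ext y
        simp only [Set.mem_setOf_eq, Set.mem_inter_iff, Set.mem_diff,
          Set.mem_singleton_iff]
        constructor
        · intro hy
          exact ⟨⟨hy, hav y hy⟩, ra_trans hcv (chain_ra l hchain hav hvl hy)⟩
        · rintro ⟨⟨hyl, _⟩, _⟩
          exact hyl
      · left
        rw [Set.eq_empty_iff_forall_notMem]
        rintro y ⟨⟨hyl, hyx⟩, hcy⟩
        exact hS ⟨y, hyl, hcy⟩
  · -- Part 2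
    intro i hi0 hi hxeq
    refine ⟨?_, sep_take hsep i, sep_drop hsep (i + 1)⟩
    rintro ⟨q, hq⟩
    have := hsep i hi0 hi q
    rw [← hxeq] at this
    exact hq this
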